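/- For each r ∈ (0,1) there exists θ ∈ (0, π/2) such that on the sector D_{r,θ} = {z : 0 < |z| ≤ r, |arg z| ≤ θ} the following hold: (a) S(z) ≠ 0 and in particular A_k(z) ≠ 0 for all k ≥ 0; (b) B(z) ≠ 0, where B = lim_{n→∞} ∏_{j=1}^{n} B_j; (c) the products ∏_{j=1}^{n} A_j(z)^{−j} converge uniformly on D_{r,θ} as n → ∞ to a bounded holomorphic function C with C(z) ≠ 0 for all z ∈ D_{r,θ}. -/

import Mathlib

open Filter Topology Complex



-- pow difference bound
lemma aux_powdiff (s : ℝ) : ∀ (k : ℕ) (w1 w2 : ℂ), ‖w1‖ ≤ s → ‖w2‖ ≤ s →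
    ‖w1 ^ k - w2 ^ k‖ ≤ k * s ^ (k - 1) * ‖w1 - w2‖ := by
  intro k
  induction k with
  | zero => intro w1 w2 _ _; simp
  | succ k ih =>
    intro w1 w2 h1 h2
    have hs0 : 0 ≤ s := le_trans (norm_nonneg _) h1
    have key : w1 ^ (k+1) - w2 ^ (k+1) = w1 ^ k * (w1 - w2) + (w1 ^ k - w2 ^ k) * w2 := by ring
    rw [key]
    have b1 : ‖w1 ^ k * (w1 - w2)‖ ≤ s ^ k * ‖w1 - w2‖ := by
      rw [norm_mul, norm_pow]
      gcongr
    have b2 : ‖(w1 ^ k - w2 ^ k) * w2‖ ≤ (k * s ^ (k-1) * ‖w1 - w2‖) * s := by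
      rw [norm_mul]
      exact mul_le_mul (ih w1 w2 h1 h2) h2 (norm_nonneg _) (by positivity)
    have hkk : (k + 1) - 1 = k := by omega
    rw [hkk]
    calc ‖w1 ^ k * (w1 - w2) + (w1 ^ k - w2 ^ k) * w2‖
        ≤ s ^ k * ‖w1 - w2‖ + (k * s ^ (k-1) * ‖w1 - w2‖) * s :=
          le_trans (norm_add_le _ _) (add_le_add b1 b2)
      _ ≤ (k+1 : ℕ) * s ^ k * ‖w1 - w2‖ := by
          rcases Nat.eq_zero_or_pos k with rfl | hk
          · simp
          · have hss : s ^ (k - 1) * s = s ^ k := by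
              rw [← pow_succ]; congr 1; omega
            push_cast
            have : (k:ℝ) * s ^ (k - 1) * ‖w1 - w2‖ * s = (k:ℝ) * s ^ k * ‖w1 - w2‖ := by
              rw [← hss]; ring
            rw [this]; ring_nf; rfl

-- k * s^(k-1) ≤ (1-s)⁻²
lemma aux_ksk (s : ℝ) (hs0 : 0 ≤ s) (hs1 : s < 1) (k : ℕ) :
    (k : ℝ) * s ^ (k - 1) ≤ ((1 - s)⁻¹) ^ 2 := by
  rcases k with _ | m
  · simp; positivity
  · have h1 : HasSum (fun n : ℕ => (n : ℝ) * s ^ n) (s / (1 - s) ^ 2) :=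
      hasSum_coe_mul_geometric_of_norm_lt_one (by rwa [Real.norm_eq_abs, _root_.abs_of_nonneg hs0])
    have h2 : HasSum (fun n : ℕ => s ^ n) (1 - s)⁻¹ :=
      hasSum_geometric_of_lt_one hs0 hs1
    have h3 : HasSum (fun n : ℕ => (n : ℝ) * s ^ n + s ^ n) (s / (1 - s) ^ 2 + (1 - s)⁻¹) :=
      h1.add h2
    have h4 := le_hasSum h3 m (fun i _ => by positivity)
    have hne : (1 : ℝ) - s ≠ 0 := by linarith
    have hval : s / (1 - s) ^ 2 + (1 - s)⁻¹ = ((1 - s)⁻¹) ^ 2 := by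
      field_simp
      ring
    rw [hval] at h4
    calc ((m + 1 : ℕ) : ℝ) * s ^ ((m + 1) - 1) = (m : ℝ) * s ^ m + s ^ m := by
          have hkk : (m+1) - 1 = m := by omega
          rw [hkk]; push_cast; ring
      _ ≤ _ := h4

lemma aux_summable_pow (v : ℕ → ℝ) (hnn : ∀ l, 0 ≤ v l) (hv : Summable v)
    (φ : ℕ → ℕ) (w : ℂ) (hw : ‖w‖ ≤ 1) :
    Summable (fun l => (v l : ℂ) * w ^ φ l) := by
  apply Summable.of_norm_bounded hv
  intro l
  rw [norm_mul, norm_pow]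
  calc ‖((v l : ℝ) : ℂ)‖ * ‖w‖ ^ φ l ≤ ‖((v l : ℝ) : ℂ)‖ * 1 := by
        gcongr
        exact pow_le_one₀ (norm_nonneg _) hw
    _ = v l := by rw [mul_one, Complex.norm_real, Real.norm_eq_abs, _root_.abs_of_nonneg (hnn l)]

lemma aux_tsum_lip (v : ℕ → ℝ) (hnn : ∀ l, 0 ≤ v l) (hv : Summable v) (hv1 : ∑' l, v l ≤ 1)
    (φ : ℕ → ℕ) (s : ℝ) (hs1 : s < 1) (w1 w2 : ℂ) (h1 : ‖w1‖ ≤ s) (h2 : ‖w2‖ ≤ s) :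
    ‖(∑' l, (v l : ℂ) * w1 ^ φ l) - ∑' l, (v l : ℂ) * w2 ^ φ l‖
      ≤ ((1 - s)⁻¹) ^ 2 * ‖w1 - w2‖ := by
  have hs0 : 0 ≤ s := le_trans (norm_nonneg _) h1
  have hw1 : ‖w1‖ ≤ 1 := h1.trans hs1.le
  have hw2 : ‖w2‖ ≤ 1 := h2.trans hs1.le
  have s1 := aux_summable_pow v hnn hv φ w1 hw1
  have s2 := aux_summable_pow v hnn hv φ w2 hw2
  rw [← Summable.tsum_sub s1 s2]
  have hC : (0:ℝ) ≤ ((1 - s)⁻¹) ^ 2 * ‖w1 - w2‖ := by positivity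
  have key : ∀ l, ‖(v l : ℂ) * w1 ^ φ l - (v l : ℂ) * w2 ^ φ l‖
      ≤ v l * (((1 - s)⁻¹) ^ 2 * ‖w1 - w2‖) := by
    intro l
    have h2' : ‖w1 ^ φ l - w2 ^ φ l‖ ≤ ((1 - s)⁻¹) ^ 2 * ‖w1 - w2‖ :=
      (aux_powdiff s (φ l) w1 w2 h1 h2).trans
        (mul_le_mul_of_nonneg_right (aux_ksk s hs0 hs1 (φ l)) (norm_nonneg _))
    rw [← mul_sub, norm_mul, Complex.norm_real, Real.norm_eq_abs,
      _root_.abs_of_nonneg (hnn l)]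
    exact mul_le_mul_of_nonneg_left h2' (hnn l)
  have hsum : Summable (fun l => v l * (((1 - s)⁻¹) ^ 2 * ‖w1 - w2‖)) := hv.mul_right _
  have hsn : Summable (fun l => ‖(v l : ℂ) * w1 ^ φ l - (v l : ℂ) * w2 ^ φ l‖) :=
    Summable.of_nonneg_of_le (fun l => norm_nonneg _) key hsum
  calc ‖∑' l, ((v l : ℂ) * w1 ^ φ l - (v l : ℂ) * w2 ^ φ l)‖
      ≤ ∑' l, ‖(v l : ℂ) * w1 ^ φ l - (v l : ℂ) * w2 ^ φ l‖ := norm_tsum_le_tsum_norm hsn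
    _ ≤ ∑' l, v l * (((1 - s)⁻¹) ^ 2 * ‖w1 - w2‖) := Summable.tsum_le_tsum key hsn hsum
    _ = (∑' l, v l) * (((1 - s)⁻¹) ^ 2 * ‖w1 - w2‖) := tsum_mul_right
    _ ≤ 1 * (((1 - s)⁻¹) ^ 2 * ‖w1 - w2‖) := mul_le_mul_of_nonneg_right hv1 hC
    _ = ((1 - s)⁻¹) ^ 2 * ‖w1 - w2‖ := one_mul _

lemma aux_tsum_norm (v : ℕ → ℝ) (hnn : ∀ l, 0 ≤ v l) (hv : Summable v) (hv1 : ∑' l, v l ≤ 1)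
    (φ : ℕ → ℕ) (hφ : ∀ l, v l ≠ 0 → 1 ≤ φ l) (w : ℂ) (hw : ‖w‖ ≤ 1) :
    ‖∑' l, (v l : ℂ) * w ^ φ l‖ ≤ ‖w‖ := by
  have key : ∀ l, ‖(v l : ℂ) * w ^ φ l‖ ≤ v l * ‖w‖ := by
    intro l
    rcases eq_or_ne (v l) 0 with h | h
    · simp [h]
    · rw [norm_mul, norm_pow, Complex.norm_real, Real.norm_eq_abs, _root_.abs_of_nonneg (hnn l)]
      apply mul_le_mul_of_nonneg_left _ (hnn l)
      calc ‖w‖ ^ φ l ≤ ‖w‖ ^ 1 := pow_le_pow_of_le_one (norm_nonneg _) hw (hφ l h)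
        _ = ‖w‖ := pow_one _
  have hsum : Summable (fun l => v l * ‖w‖) := hv.mul_right _
  have hsn : Summable (fun l => ‖(v l : ℂ) * w ^ φ l‖) :=
    Summable.of_nonneg_of_le (fun l => norm_nonneg _) key hsum
  calc ‖∑' l, (v l : ℂ) * w ^ φ l‖ ≤ ∑' l, ‖(v l : ℂ) * w ^ φ l‖ := norm_tsum_le_tsum_norm hsn
    _ ≤ ∑' l, v l * ‖w‖ := Summable.tsum_le_tsum key hsn hsum
    _ = (∑' l, v l) * ‖w‖ := tsum_mul_right
    _ ≤ 1 * ‖w‖ := mul_le_mul_of_nonneg_right hv1 (norm_nonneg _)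
    _ = ‖w‖ := one_mul _

lemma aux_log_norm_le (K : ℝ) (w : ℂ) (h1 : 1/2 ≤ ‖w‖) (h2 : ‖w‖ ≤ K) :
    ‖Complex.log w‖ ≤ Real.log 2 + K + Real.pi := by
  have hw0 : (0:ℝ) < ‖w‖ := by linarith
  have hre : (Complex.log w).re = Real.log (‖w‖) := Complex.log_re w
  have him : (Complex.log w).im = Complex.arg w := Complex.log_im w
  have h3 : ‖Complex.log w‖ ≤ |(Complex.log w).re| + |(Complex.log w).im| :=
    Complex.norm_le_abs_re_add_abs_im _
  have harg : |Complex.arg w| ≤ Real.pi := Complex.abs_arg_le_pi w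
  have hlog : |Real.log (‖w‖)| ≤ Real.log 2 + K := by
    rcases le_or_gt 1 (‖w‖) with h | h
    · have hl0 : 0 ≤ Real.log (‖w‖) := Real.log_nonneg h
      rw [_root_.abs_of_nonneg hl0]
      have : Real.log (‖w‖) ≤ ‖w‖ - 1 :=
        Real.log_le_sub_one_of_pos hw0
      have h2p : (0:ℝ) ≤ Real.log 2 := Real.log_nonneg (by norm_num)
      linarith
    · have hl0 : Real.log (‖w‖) < 0 := Real.log_neg hw0 h
      rw [abs_of_neg hl0, ← Real.log_inv]
      have : (‖w‖)⁻¹ ≤ 2 := by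
        rw [inv_le_comm₀ hw0 (by norm_num)]
        linarith
      have := Real.log_le_log (by positivity) this
      have hK : (0:ℝ) ≤ K := by linarith
      linarith
  rw [hre, him] at h3
  linarith

lemma aux_log_small (w : ℂ) (h : ‖w - 1‖ ≤ 1/2) :
    ‖Complex.log w‖ ≤ (3/2) * ‖w - 1‖ := by
  have := Complex.norm_log_one_add_half_le_self (z := w - 1) (by simpa using h)
  simpa using this

lemma aux_sum_Icc (g : ℕ → ℂ) (hg : g 0 = 0) (n : ℕ) :
    ∑ j ∈ Finset.Icc 1 n, g j = ∑ j ∈ Finset.range (n + 1), g j := by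
  have h : Finset.range (n + 1) = insert 0 (Finset.Icc 1 n) := by
    ext m
    simp only [Finset.mem_range, Finset.mem_insert, Finset.mem_Icc]
    omega
  rw [h, Finset.sum_insert (by simp), hg, zero_add]

lemma aux_prod_Icc (g : ℕ → ℂ) (hg : g 0 = 1) (n : ℕ) :
    ∏ j ∈ Finset.Icc 1 n, g j = ∏ j ∈ Finset.range (n + 1), g j := by
  have h : Finset.range (n + 1) = insert 0 (Finset.Icc 1 n) := by
    ext m
    simp only [Finset.mem_range, Finset.mem_insert, Finset.mem_Icc]
    omega
  rw [h, Finset.prod_insert (by simp), hg, one_mul]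

lemma aux_exp_unif (F : ℕ → ℂ → ℂ) (g : ℂ → ℂ) (s : Set ℂ) (T : ℝ)
    (hb : ∀ x ∈ s, (g x).re ≤ T)
    (h : TendstoUniformlyOn F g atTop s) :
    TendstoUniformlyOn (fun n x => Complex.exp (F n x)) (fun x => Complex.exp (g x))
      atTop s := by
  rw [Metric.tendstoUniformlyOn_iff] at h ⊢
  intro ε hε
  have hT : 0 < Real.exp T := Real.exp_pos T
  have hδ : 0 < min 1 (ε / (2 * Real.exp T + 1)) := by positivity
  filter_upwards [h _ hδ] with n hn x hx
  have hd := hn x hx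
  rw [dist_eq_norm] at hd ⊢
  have hlt1 : ‖F n x - g x‖ ≤ 1 := by
    rw [← neg_sub, norm_neg]
    exact (le_of_lt hd).trans (min_le_left _ _)
  have key : Complex.exp (g x) - Complex.exp (F n x)
      = Complex.exp (g x) * (1 - Complex.exp (F n x - g x)) := by
    rw [mul_sub, mul_one, ← Complex.exp_add]
    ring_nf
  rw [key, norm_mul]
  have h1 : ‖Complex.exp (g x)‖ ≤ Real.exp T := by
    rw [Complex.norm_exp]
    exact Real.exp_le_exp.mpr (hb x hx)
  have h2 : ‖1 - Complex.exp (F n x - g x)‖ ≤ 2 * ‖F n x - g x‖ := by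
    rw [← norm_neg, neg_sub]
    exact Complex.norm_exp_sub_one_le (by exact_mod_cast hlt1)
  have h3 : ‖F n x - g x‖ < min 1 (ε / (2 * Real.exp T + 1)) := by
    rw [← neg_sub, norm_neg]; exact hd
  calc ‖Complex.exp (g x)‖ * ‖1 - Complex.exp (F n x - g x)‖
      ≤ Real.exp T * (2 * ‖F n x - g x‖) := by
        apply mul_le_mul h1 h2 (norm_nonneg _) hT.le
    _ < Real.exp T * (2 * (ε / (2 * Real.exp T + 1))) := by
        have := lt_of_lt_of_le h3 (min_le_right _ _)
        have h4 : (0:ℝ) < 2 := by norm_num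
        gcongr
    _ ≤ ε := by
        have hpos : (0:ℝ) < 2 * Real.exp T + 1 := by positivity
        rw [div_eq_mul_inv]
        have : Real.exp T * (2 * (ε * (2 * Real.exp T + 1)⁻¹))
            = ε * ((2 * Real.exp T) * (2 * Real.exp T + 1)⁻¹) := by ring
        rw [this]
        nth_rewrite 2 [← mul_one ε]
        apply mul_le_mul_of_nonneg_left _ hε.le
        rw [mul_inv_le_iff₀ hpos]
        linarith

lemma aux_open (R θ : ℝ) (hθ : 0 < θ) (hθ2 : θ < Real.pi / 2) :
    IsOpen {z : ℂ | z ≠ 0 ∧ ‖z‖ < R ∧ |z.arg| < θ} := by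
  rw [isOpen_iff_mem_nhds]
  rintro z ⟨hz0, hzR, hzθ⟩
  have hπ : Real.pi / 2 < Real.pi := by
    have := Real.pi_pos; linarith
  have hslit : z ∈ Complex.slitPlane := by
    rw [Complex.mem_slitPlane_iff_arg]
    refine ⟨fun h => ?_, hz0⟩
    rw [h] at hzθ
    rw [_root_.abs_of_nonneg Real.pi_pos.le] at hzθ
    linarith
  have hc : ContinuousAt Complex.arg z := Complex.continuousAt_arg hslit
  have h1 : {w : ℂ | w ≠ 0} ∈ 𝓝 z := compl_singleton_mem_nhds hz0
  have h2 : {w : ℂ | ‖w‖ < R} ∈ 𝓝 z :=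
    (isOpen_lt continuous_norm continuous_const).mem_nhds hzR
  have h3 : {w : ℂ | |w.arg| < θ} ∈ 𝓝 z := by
    have hopen : IsOpen {t : ℝ | |t| < θ} := isOpen_lt (continuous_abs) continuous_const
    exact hc.preimage_mem_nhds (hopen.mem_nhds hzθ)
  exact Filter.inter_mem h1 (Filter.inter_mem h2 h3)

lemma aux_split {α : Type*} [AddCommGroup α] [UniformSpace α] [IsUniformAddGroup α] [T2Space α] [CompleteSpace α]
    (F : ℕ → α) (hsum : Summable F) (h0 : F 0 = 0) :
    ∑' l, F l = F 1 + ∑' l, (if 1 < l then F l else 0) := by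
  have hG : Summable (fun l => if 1 < l then F l else 0) :=
    hsum.summable_of_eq_zero_or_self (fun l => by split <;> simp)
  have hH : Summable (fun l : ℕ => if l = 1 then F 1 else 0) :=
    summable_of_ne_finset_zero (s := {1}) (fun l hl => by
      simp only [Finset.mem_singleton] at hl; simp [hl])
  have heq : ∀ l, F l = (if l = 1 then F 1 else 0) + (if 1 < l then F l else 0) := by
    intro l
    rcases l with _ | _ | l
    · simp [h0]
    · simp
    · simp
  calc ∑' l, F l = ∑' l, ((if l = 1 then F 1 else 0) + (if 1 < l then F l else 0)) :=
        tsum_congr heq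
    _ = (∑' l, if l = 1 then F 1 else 0) + ∑' l, (if 1 < l then F l else 0) :=
        Summable.tsum_add hH hG
    _ = F 1 + ∑' l, (if 1 < l then F l else 0) := by rw [tsum_ite_eq]

lemma aux_summable_mod (N : ℕ) (g : ℕ → ℝ) (hg : Summable g) (F : ℕ → ℝ)
    (h : ∀ j, N ≤ j → F j = g j) : Summable F := by
  have : F = fun j => g j + (F j - g j) := by funext j; ring
  rw [this]
  apply hg.add
  apply summable_of_ne_finset_zero (s := Finset.range N)
  intro j hj
  rw [h j (by simpa using hj)]
  ring

lemma aux_diff (v : ℕ → ℝ) (hnn : ∀ l, 0 ≤ v l) (hv : Summable v) (φ : ℕ → ℕ) :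
    DifferentiableOn ℂ (fun w => ∑' l, (v l : ℂ) * w ^ φ l) (Metric.ball (0:ℂ) 1) := by
  apply differentiableOn_tsum_of_summable_norm hv
    (fun l => ((differentiable_const _).mul (differentiable_pow _)).differentiableOn)
    Metric.isOpen_ball
  intro l w hw
  rw [Metric.mem_ball, dist_zero_right] at hw
  rw [norm_mul, norm_pow, Complex.norm_real, Real.norm_eq_abs, _root_.abs_of_nonneg (hnn l)]
  calc v l * ‖w‖ ^ φ l ≤ v l * 1 :=
        mul_le_mul_of_nonneg_left (pow_le_one₀ (norm_nonneg _) hw.le) (hnn l)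
    _ = v l := mul_one _


set_option maxHeartbeats 1000000 in
/-- For each `r ∈ (0,1)` there is `θ ∈ (0,π/2)` such that on the sector
`D_{r,θ} = {z : 0 < |z| ≤ r, |arg z| ≤ θ}`: (a) `S(z) ≠ 0` and `A_k(z) ≠ 0` for all `k`;
(b) `B(z) ≠ 0`; (c) `∏_{j=1}^n A_j(z)^{−j}` converges uniformly to a bounded holomorphic
nowhere-vanishing function `C`. -/
theorem stmt_7
    (p : ℕ → ℝ) (hp0 : p 0 = 0) (hp1 : 0 < p 1) (hp1' : p 1 < 1)
    (hpnn : ∀ k, 0 ≤ p k) (hpsum : ∑' k, p k = 1)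
    (hmean : Summable fun k : ℕ => (k : ℝ) * p k)
    (a : ℝ) (ha : a = ∑' k : ℕ, (k : ℝ) * p k) (ha1 : 1 < a)
    (f : ℂ → ℂ) (hf : ∀ z : ℂ, ‖z‖ ≤ 1 → f z = ∑' n, (p n : ℂ) * z ^ n)
    (fIter : ℕ → ℂ → ℂ) (hf0 : ∀ z, fIter 0 z = z)
    (hfS : ∀ n z, fIter (n + 1) z = f (fIter n z))
    (A : ℕ → ℂ → ℂ)
    (hA : ∀ j z, A j z =
      1 + (p 1 : ℂ)⁻¹ * ∑' l : ℕ, if 1 < l then (p l : ℂ) * fIter j z ^ (l - 1) else 0)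
    (S : ℂ → ℂ)
    (hS : ∀ z : ℂ, ‖z‖ < 1 →
      Tendsto (fun n => fIter n z / (p 1 : ℂ) ^ n) atTop (𝓝 (S z)))
    (q : ℕ → ℝ) (hq0 : q 0 = 0) (hqnn : ∀ k, 0 ≤ q k) (hqsum : ∑' k, q k = 1)
    (ν : ℕ) (hν : 0 < q ν) (hνmin : ∀ i, 0 < q i → ν ≤ i)
    (B : ℕ → ℂ → ℂ)
    (hB : ∀ n z, B n z =
      1 + (q ν : ℂ)⁻¹ * ∑' l : ℕ, if ν < l then (q l : ℂ) * fIter n z ^ (l - ν) else 0)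
    (r : ℝ) (hr0 : 0 < r) (hr1 : r < 1)
    (Blim : ℂ → ℂ)
    (hBlim : TendstoUniformlyOn (fun n z => ∏ j ∈ Finset.Icc 1 n, B j z) Blim atTop
      {z : ℂ | ‖z‖ ≤ r}) :
    ∃ θ : ℝ, 0 < θ ∧ θ < Real.pi / 2 ∧
      (∀ z : ℂ, z ≠ 0 → ‖z‖ ≤ r → |z.arg| ≤ θ →
        S z ≠ 0 ∧ (∀ k : ℕ, A k z ≠ 0) ∧ Blim z ≠ 0) ∧
      ∃ Cfun : ℂ → ℂ,
        TendstoUniformlyOn (fun n z => ∏ j ∈ Finset.Icc 1 n, A j z ^ (-(j : ℤ))) Cfun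
          atTop {z : ℂ | z ≠ 0 ∧ ‖z‖ ≤ r ∧ |z.arg| ≤ θ} ∧
        DifferentiableOn ℂ Cfun {z : ℂ | z ≠ 0 ∧ ‖z‖ ≤ r ∧ |z.arg| ≤ θ} ∧
        (∃ M : ℝ, ∀ z : ℂ, z ≠ 0 → ‖z‖ ≤ r → |z.arg| ≤ θ → ‖Cfun z‖ ≤ M) ∧
        (∀ z : ℂ, z ≠ 0 → ‖z‖ ≤ r → |z.arg| ≤ θ → Cfun z ≠ 0) := by
  classical
  have hsp : Summable p := by
    by_contra h
    rw [tsum_eq_zero_of_not_summable h] at hpsum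
    norm_num at hpsum
  have hsq : Summable q := by
    by_contra h
    rw [tsum_eq_zero_of_not_summable h] at hqsum
    norm_num at hqsum
  set R : ℝ := (1 + r) / 2 with hRdef
  have hrR : r < R := by rw [hRdef]; linarith
  have hR1 : R < 1 := by rw [hRdef]; linarith
  have hR0 : 0 < R := by rw [hRdef]; linarith
  set R' : ℝ := (1 + R) / 2 with hR'def
  have hRR' : R < R' := by rw [hR'def]; linarith
  have hR'1 : R' < 1 := by rw [hR'def]; linarith
  have hR'0 : 0 < R' := by rw [hR'def]; linarith
  set c : ℝ := p 1 + (1 - p 1) * R' with hcdef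
  have hc0 : 0 < c := by
    have h1 : 0 < (1 - p 1) * R' := mul_pos (by linarith) hR'0
    rw [hcdef]; linarith
  have hc1 : c < 1 := by
    have h1 : 0 < (1 - p 1) * (1 - R') := mul_pos (by linarith) (by linarith)
    rw [hcdef]; nlinarith
  set vP : ℕ → ℝ := fun l => if 1 < l then p l else 0 with hvPdef
  set vQ : ℕ → ℝ := fun l => if ν < l then q l else 0 with hvQdef
  have hvPnn : ∀ l, 0 ≤ vP l := by
    intro l; rw [hvPdef]; dsimp only; split
    · exact hpnn l
    · exact le_refl 0
  have hvQnn : ∀ l, 0 ≤ vQ l := by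
    intro l; rw [hvQdef]; dsimp only; split
    · exact hqnn l
    · exact le_refl 0
  have hvP : Summable vP := hsp.summable_of_eq_zero_or_self (fun l => by
    rw [hvPdef]; dsimp only; split
    · right; rfl
    · left; rfl)
  have hvQ : Summable vQ := hsq.summable_of_eq_zero_or_self (fun l => by
    rw [hvQdef]; dsimp only; split
    · right; rfl
    · left; rfl)
  have htsvP : ∑' l, vP l = 1 - p 1 := by
    have h1 := aux_split p hsp hp0
    rw [hpsum] at h1
    have h2 : ∑' l, vP l = ∑' l, (if 1 < l then p l else 0) := by
      apply tsum_congr; intro l; rw [hvPdef]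
    rw [h2]; linarith
  have hvPle : ∑' l, vP l ≤ 1 := by rw [htsvP]; linarith
  have hvQle : ∑' l, vQ l ≤ 1 := by
    have h1 : ∑' l, vQ l ≤ ∑' l, q l := by
      apply Summable.tsum_le_tsum _ hvQ hsq
      intro l; rw [hvQdef]; dsimp only; split
      · exact le_refl _
      · exact hqnn l
    rw [hqsum] at h1; exact h1
  set G : ℂ → ℂ := fun w => ∑' l, ((vP l : ℝ) : ℂ) * w ^ (l - 1) with hGdef
  set H : ℂ → ℂ := fun w => ∑' l, ((vQ l : ℝ) : ℂ) * w ^ (l - ν) with hHdef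
  have hA' : ∀ j z, A j z = 1 + (p 1 : ℂ)⁻¹ * G (fIter j z) := by
    intro j z
    rw [hA j z, hGdef]
    congr 2
    apply tsum_congr; intro l
    rw [hvPdef]; dsimp only
    split
    · rfl
    · simp
  have hB' : ∀ j z, B j z = 1 + (q ν : ℂ)⁻¹ * H (fIter j z) := by
    intro j z
    rw [hB j z, hHdef]
    congr 2
    apply tsum_congr; intro l
    rw [hvQdef]; dsimp only
    split
    · rfl
    · simp
  have hfc : ∀ t : ℝ, 0 ≤ t → t ≤ R' → ∀ w : ℂ, ‖w‖ ≤ t → ‖f w‖ ≤ c * t := by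
    intro t ht0 htR' w hw
    have hw1 : ‖w‖ ≤ 1 := hw.trans (htR'.trans hR'1.le)
    rw [hf w hw1]
    have hb : ∀ n, ‖(p n : ℂ) * w ^ n‖ ≤ vP n * (R' * t) + (if n = 1 then p 1 * t else 0) := by
      intro n
      rw [norm_mul, norm_pow, Complex.norm_real, Real.norm_eq_abs,
        _root_.abs_of_nonneg (hpnn n)]
      rcases n with _ | _ | n
      · simp only [hp0, zero_mul, if_neg (by norm_num : (0:ℕ) ≠ 1)]
        have : vP 0 = 0 := by rw [hvPdef]; norm_num
        rw [this]
        positivity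
      · have : vP 1 = 0 := by rw [hvPdef]; norm_num
        rw [this, if_pos rfl, zero_mul, pow_one]
        linarith [mul_le_mul_of_nonneg_left hw hp1.le]
      · have hvv : vP (n + 2) = p (n + 2) := by rw [hvPdef]; dsimp only; rw [if_pos (by omega)]
        rw [hvv, if_neg (by omega), add_zero]
        apply mul_le_mul_of_nonneg_left _ (hpnn _)
        calc ‖w‖ ^ (n + 2) = ‖w‖ ^ n * (‖w‖ * ‖w‖) := by ring
          _ ≤ 1 * (R' * t) := by
              apply mul_le_mul _ _ (by positivity) (by norm_num)
              · exact pow_le_one₀ (norm_nonneg _) hw1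
              · exact mul_le_mul (hw.trans htR') hw (norm_nonneg _) hR'0.le
          _ = R' * t := one_mul _
    have hS2 : Summable (fun n : ℕ => if n = 1 then p 1 * t else 0) :=
      summable_of_ne_finset_zero (s := {1}) (fun l hl => by
        simp only [Finset.mem_singleton] at hl; simp [hl])
    have hSB : Summable (fun n => vP n * (R' * t) + (if n = 1 then p 1 * t else 0)) :=
      (hvP.mul_right _).add hS2
    have hS1 : Summable (fun n => ‖(p n : ℂ) * w ^ n‖) :=
      Summable.of_nonneg_of_le (fun _ => norm_nonneg _) hb hSB
    calc ‖∑' n, (p n : ℂ) * w ^ n‖ ≤ ∑' n, ‖(p n : ℂ) * w ^ n‖ := norm_tsum_le_tsum_norm hS1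
      _ ≤ ∑' n, (vP n * (R' * t) + (if n = 1 then p 1 * t else 0)) := Summable.tsum_le_tsum hb hS1 hSB
      _ = (∑' n, vP n * (R' * t)) + ∑' n : ℕ, (if n = 1 then p 1 * t else 0) :=
          Summable.tsum_add (hvP.mul_right _) hS2
      _ = (∑' n, vP n) * (R' * t) + p 1 * t := by rw [tsum_mul_right, tsum_ite_eq]
      _ = c * t := by rw [htsvP, hcdef]; ring
  have hiter : ∀ t : ℝ, 0 ≤ t → t ≤ R' → ∀ (j : ℕ) (w : ℂ), ‖w‖ ≤ t →
      ‖fIter j w‖ ≤ c ^ j * t := by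
    intro t ht0 htR' j
    induction j with
    | zero => intro w hw; rw [hf0]; simpa using hw
    | succ j ih =>
      intro w hw
      have h1 : ‖fIter j w‖ ≤ c ^ j * t := ih w hw
      have hcj : c ^ j ≤ 1 := pow_le_one₀ hc0.le hc1.le
      have h2 : c ^ j * t ≤ R' := by nlinarith
      have h3 := hfc (c ^ j * t) (by positivity) h2 _ h1
      rw [hfS]
      calc ‖f (fIter j w)‖ ≤ c * (c ^ j * t) := h3
        _ = c ^ (j + 1) * t := by ring
  set M : ℝ := ((1 - R')⁻¹) ^ 2 with hMdef
  have hM0 : 0 < M := by rw [hMdef]; exact pow_pos (inv_pos.mpr (by linarith)) 2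
  have hM1 : 1 ≤ M := by
    have h1 : 0 < 1 - R' := by linarith
    have h3 : 1 ≤ (1 - R')⁻¹ := by
      rw [one_le_inv_iff₀]; exact ⟨h1, by linarith⟩
    rw [hMdef]; nlinarith
  have hLipf : ∀ w1 w2 : ℂ, ‖w1‖ ≤ R' → ‖w2‖ ≤ R' → ‖f w1 - f w2‖ ≤ M * ‖w1 - w2‖ := by
    intro w1 w2 h1 h2
    rw [hf w1 (h1.trans hR'1.le), hf w2 (h2.trans hR'1.le), hMdef]
    exact aux_tsum_lip p hpnn hsp hpsum.le (fun n => n) R' hR'1 w1 w2 h1 h2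
  have hLipG : ∀ w1 w2 : ℂ, ‖w1‖ ≤ R' → ‖w2‖ ≤ R' → ‖G w1 - G w2‖ ≤ M * ‖w1 - w2‖ := by
    intro w1 w2 h1 h2
    rw [hGdef, hMdef]
    exact aux_tsum_lip vP hvPnn hvP hvPle (fun l => l - 1) R' hR'1 w1 w2 h1 h2
  have hLipH : ∀ w1 w2 : ℂ, ‖w1‖ ≤ R' → ‖w2‖ ≤ R' → ‖H w1 - H w2‖ ≤ M * ‖w1 - w2‖ := by
    intro w1 w2 h1 h2
    rw [hHdef, hMdef]
    exact aux_tsum_lip vQ hvQnn hvQ hvQle (fun l => l - ν) R' hR'1 w1 w2 h1 h2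
  have hIterR : ∀ (j : ℕ) (z : ℂ), ‖z‖ ≤ R → ‖fIter j z‖ ≤ c ^ j * R :=
    fun j z hz => hiter R hR0.le hRR'.le j z hz
  have hcjR1 : ∀ j : ℕ, c ^ j * R ≤ 1 := by
    intro j
    have hcj : c ^ j ≤ 1 := pow_le_one₀ hc0.le hc1.le
    nlinarith
  have hIterR' : ∀ (j : ℕ) (z : ℂ), ‖z‖ ≤ R → ‖fIter j z‖ ≤ R' := by
    intro j z hz
    have h1 := hIterR j z hz
    have hcj : c ^ j ≤ 1 := pow_le_one₀ hc0.le hc1.le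
    nlinarith
  have hLipIter : ∀ (j : ℕ) (z1 z2 : ℂ), ‖z1‖ ≤ R → ‖z2‖ ≤ R →
      ‖fIter j z1 - fIter j z2‖ ≤ M ^ j * ‖z1 - z2‖ := by
    intro j
    induction j with
    | zero => intro z1 z2 h1 h2; rw [hf0, hf0, pow_zero, one_mul]
    | succ j ih =>
      intro z1 z2 h1 h2
      rw [hfS, hfS]
      calc ‖f (fIter j z1) - f (fIter j z2)‖ ≤ M * ‖fIter j z1 - fIter j z2‖ :=
            hLipf _ _ (hIterR' j z1 h1) (hIterR' j z2 h2)
        _ ≤ M * (M ^ j * ‖z1 - z2‖) := mul_le_mul_of_nonneg_left (ih z1 z2 h1 h2) hM0.le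
        _ = M ^ (j + 1) * ‖z1 - z2‖ := by ring
  have hGle : ∀ w : ℂ, ‖w‖ ≤ 1 → ‖G w‖ ≤ ‖w‖ := by
    intro w hw
    rw [hGdef]
    apply aux_tsum_norm vP hvPnn hvP hvPle (fun l => l - 1) _ w hw
    intro l hl
    rw [hvPdef] at hl; dsimp only at hl
    by_cases h : 1 < l
    · exact (by omega : 1 ≤ l - 1)
    · rw [if_neg h] at hl; exact absurd rfl hl
  have hHle : ∀ w : ℂ, ‖w‖ ≤ 1 → ‖H w‖ ≤ ‖w‖ := by
    intro w hw
    rw [hHdef]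
    apply aux_tsum_norm vQ hvQnn hvQ hvQle (fun l => l - ν) _ w hw
    intro l hl
    rw [hvQdef] at hl; dsimp only at hl
    by_cases h : ν < l
    · exact (by omega : 1 ≤ l - ν)
    · rw [if_neg h] at hl; exact absurd rfl hl
  have hAd : ∀ (j : ℕ) (z : ℂ), ‖z‖ ≤ R → ‖A j z - 1‖ ≤ (p 1)⁻¹ * (c ^ j * R) := by
    intro j z hz
    rw [hA' j z, add_sub_cancel_left, norm_mul]
    have h1 : ‖((p 1 : ℝ) : ℂ)⁻¹‖ = (p 1)⁻¹ := by
      rw [norm_inv, Complex.norm_real, Real.norm_eq_abs, _root_.abs_of_nonneg hp1.le]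
    rw [h1]
    apply mul_le_mul_of_nonneg_left _ (inv_nonneg.mpr hp1.le)
    exact (hGle _ ((hIterR j z hz).trans (hcjR1 j))).trans (hIterR j z hz)
  have hBd : ∀ (j : ℕ) (z : ℂ), ‖z‖ ≤ R → ‖B j z - 1‖ ≤ (q ν)⁻¹ * (c ^ j * R) := by
    intro j z hz
    rw [hB' j z, add_sub_cancel_left, norm_mul]
    have h1 : ‖((q ν : ℝ) : ℂ)⁻¹‖ = (q ν)⁻¹ := by
      rw [norm_inv, Complex.norm_real, Real.norm_eq_abs, _root_.abs_of_nonneg hν.le]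
    rw [h1]
    apply mul_le_mul_of_nonneg_left _ (inv_nonneg.mpr hν.le)
    exact (hHle _ ((hIterR j z hz).trans (hcjR1 j))).trans (hIterR j z hz)
  set D : ℝ := R * ((p 1)⁻¹ + (q ν)⁻¹) + 1 with hDdef
  have hD0 : 0 < D := by
    rw [hDdef]
    have : 0 < R * ((p 1)⁻¹ + (q ν)⁻¹) :=
      mul_pos hR0 (add_pos (inv_pos.mpr hp1) (inv_pos.mpr hν))
    linarith
  have hDgt1 : R * (p 1)⁻¹ ≤ D := by
    rw [hDdef]
    have : 0 ≤ R * (q ν)⁻¹ := mul_nonneg hR0.le (inv_nonneg.mpr hν.le)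
    linarith
  have hDgt2 : R * (q ν)⁻¹ ≤ D := by
    rw [hDdef]
    have : 0 ≤ R * (p 1)⁻¹ := mul_nonneg hR0.le (inv_nonneg.mpr hp1.le)
    linarith
  obtain ⟨N, hN⟩ : ∃ N : ℕ, ∀ j ≥ N, c ^ j < (1 / 4) * D⁻¹ := by
    have hc_lt : Tendsto (fun n : ℕ => c ^ n) atTop (𝓝 0) :=
      tendsto_pow_atTop_nhds_zero_of_lt_one hc0.le hc1
    have := hc_lt.eventually (gt_mem_nhds (mul_pos (by norm_num : (0:ℝ) < 1/4) (inv_pos.mpr hD0)))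
    rw [eventually_atTop] at this
    exact this
  have hAd4 : ∀ j, N ≤ j → ∀ z : ℂ, ‖z‖ ≤ R → ‖A j z - 1‖ ≤ 1 / 4 := by
    intro j hj z hz
    have h1 := hAd j z hz
    have h2 : (p 1)⁻¹ * (c ^ j * R) ≤ 1 / 4 := by
      have h3 := hN j hj
      calc (p 1)⁻¹ * (c ^ j * R) = c ^ j * (R * (p 1)⁻¹) := by ring
        _ ≤ c ^ j * D := mul_le_mul_of_nonneg_left hDgt1 (pow_nonneg hc0.le j)
        _ ≤ ((1/4) * D⁻¹) * D := mul_le_mul_of_nonneg_right h3.le hD0.le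
        _ = 1 / 4 := by field_simp
    linarith
  have hBd4 : ∀ j, N ≤ j → ∀ z : ℂ, ‖z‖ ≤ R → ‖B j z - 1‖ ≤ 1 / 4 := by
    intro j hj z hz
    have h1 := hBd j z hz
    have h2 : (q ν)⁻¹ * (c ^ j * R) ≤ 1 / 4 := by
      have h3 := hN j hj
      calc (q ν)⁻¹ * (c ^ j * R) = c ^ j * (R * (q ν)⁻¹) := by ring
        _ ≤ c ^ j * D := mul_le_mul_of_nonneg_left hDgt2 (pow_nonneg hc0.le j)
        _ ≤ ((1/4) * D⁻¹) * D := mul_le_mul_of_nonneg_right h3.le hD0.le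
        _ = 1 / 4 := by field_simp
    linarith
  set θ₀ : ℝ := min (1/2) (min (Real.pi/4) (min (p 1) (q ν) / (4 * M ^ (N+1) * R)))
    with hθ₀def
  have hπ := Real.pi_pos
  have hθ₀pos : 0 < θ₀ := by
    rw [hθ₀def]
    apply lt_min (by norm_num)
    apply lt_min (by linarith)
    apply div_pos (lt_min hp1 hν)
    exact mul_pos (mul_pos (by norm_num : (0:ℝ) < 4) (pow_pos hM0 _)) hR0
  have hθ₀half : θ₀ ≤ 1/2 := by rw [hθ₀def]; exact min_le_left _ _
  have hθ₀pi : θ₀ ≤ Real.pi / 4 := by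
    rw [hθ₀def]; exact (min_le_right _ _).trans (min_le_left _ _)
  have hθ₀key : θ₀ ≤ min (p 1) (q ν) / (4 * M ^ (N+1) * R) := by
    rw [hθ₀def]; exact (min_le_right _ _).trans (min_le_right _ _)
  set K : Set ℂ := {z : ℂ | z ≠ 0 ∧ ‖z‖ ≤ R ∧ |z.arg| ≤ θ₀} with hKdef
  have hKmem : ∀ z : ℂ, z ∈ K → z ≠ 0 ∧ ‖z‖ ≤ R ∧ |z.arg| ≤ θ₀ := fun z hz => hz
  have hreal : ∀ x : ℝ, 0 ≤ x → x ≤ R → ∀ j, ∃ y : ℝ, 0 ≤ y ∧ fIter j (x:ℂ) = (y:ℂ) := by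
    intro x hx0 hxR j
    induction j with
    | zero => exact ⟨x, hx0, hf0 _⟩
    | succ j ih =>
      obtain ⟨y, hy0, hyEq⟩ := ih
      have hxn : ‖(x:ℂ)‖ ≤ R := by
        rw [Complex.norm_real, Real.norm_eq_abs, _root_.abs_of_nonneg hx0]; exact hxR
      have hnorm : ‖fIter j (x:ℂ)‖ ≤ c ^ j * R := hIterR j _ hxn
      have hy1 : ‖(y:ℂ)‖ ≤ 1 := by
        rw [← hyEq]; exact hnorm.trans (hcjR1 j)
      refine ⟨∑' n, p n * y ^ n, tsum_nonneg (fun n =>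
        mul_nonneg (hpnn n) (pow_nonneg hy0 n)), ?_⟩
      rw [hfS, hyEq, hf _ hy1, Complex.ofReal_tsum]
      apply tsum_congr; intro n; push_cast; ring
  have hGreal : ∀ y : ℝ, 0 ≤ y → ∃ t : ℝ, 0 ≤ t ∧ G (y:ℂ) = (t:ℂ) := by
    intro y hy0
    refine ⟨∑' l, vP l * y ^ (l - 1), tsum_nonneg (fun l =>
      mul_nonneg (hvPnn l) (pow_nonneg hy0 _)), ?_⟩
    rw [hGdef, Complex.ofReal_tsum]
    apply tsum_congr; intro l; push_cast; ring
  have hHreal : ∀ y : ℝ, 0 ≤ y → ∃ t : ℝ, 0 ≤ t ∧ H (y:ℂ) = (t:ℂ) := by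
    intro y hy0
    refine ⟨∑' l, vQ l * y ^ (l - ν), tsum_nonneg (fun l =>
      mul_nonneg (hvQnn l) (pow_nonneg hy0 _)), ?_⟩
    rw [hHdef, Complex.ofReal_tsum]
    apply tsum_congr; intro l; push_cast; ring
  have hARe1 : ∀ (j : ℕ) (x : ℝ), 0 ≤ x → x ≤ R → 1 ≤ (A j (x:ℂ)).re := by
    intro j x hx0 hxR
    obtain ⟨y, hy0, hyEq⟩ := hreal x hx0 hxR j
    obtain ⟨t, ht0, htEq⟩ := hGreal y hy0
    have hEq : A j (x:ℂ) = ((1 + (p 1)⁻¹ * t : ℝ) : ℂ) := by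
      rw [hA' j _, hyEq, htEq]
      push_cast
      ring
    rw [hEq, Complex.ofReal_re]
    have : 0 ≤ (p 1)⁻¹ * t := mul_nonneg (inv_nonneg.mpr hp1.le) ht0
    linarith
  have hBRe1 : ∀ (j : ℕ) (x : ℝ), 0 ≤ x → x ≤ R → 1 ≤ (B j (x:ℂ)).re := by
    intro j x hx0 hxR
    obtain ⟨y, hy0, hyEq⟩ := hreal x hx0 hxR j
    obtain ⟨t, ht0, htEq⟩ := hHreal y hy0
    have hEq : B j (x:ℂ) = ((1 + (q ν)⁻¹ * t : ℝ) : ℂ) := by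
      rw [hB' j _, hyEq, htEq]
      push_cast
      ring
    rw [hEq, Complex.ofReal_re]
    have : 0 ≤ (q ν)⁻¹ * t := mul_nonneg (inv_nonneg.mpr hν.le) ht0
    linarith
  have harc : ∀ z : ℂ, z ∈ K → ‖z - ((‖z‖ : ℝ) : ℂ)‖ ≤ 2 * R * θ₀ := by
    intro z hzK
    obtain ⟨hz0, hzR, hza⟩ := hKmem z hzK
    have h1 : ((‖z‖ : ℝ) : ℂ) * Complex.exp (z.arg * Complex.I) = z :=
      Complex.norm_mul_exp_arg_mul_I z
    have h2 : z - ((‖z‖ : ℝ) : ℂ)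
        = ((‖z‖ : ℝ) : ℂ) * (Complex.exp (z.arg * Complex.I) - 1) := by
      rw [mul_sub, h1, mul_one]
    rw [h2, norm_mul]
    have h3 : ‖((‖z‖ : ℝ) : ℂ)‖ ≤ R := by
      rw [Complex.norm_real, Real.norm_eq_abs, _root_.abs_of_nonneg (norm_nonneg z)]
      exact hzR
    have h4 : ‖(↑z.arg * Complex.I)‖ = |z.arg| := by
      rw [norm_mul, Complex.norm_I, mul_one, Complex.norm_real, Real.norm_eq_abs]
    have h5 : ‖Complex.exp (↑z.arg * Complex.I) - 1‖ ≤ 2 * θ₀ := by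
      calc ‖Complex.exp (↑z.arg * Complex.I) - 1‖
          ≤ 2 * ‖(↑z.arg * Complex.I)‖ := by
            apply Complex.norm_exp_sub_one_le
            rw [h4]; linarith
        _ ≤ 2 * θ₀ := by rw [h4]; linarith
    calc ‖((‖z‖ : ℝ) : ℂ)‖ * ‖Complex.exp (↑z.arg * Complex.I) - 1‖
        ≤ R * (2 * θ₀) := mul_le_mul h3 h5 (norm_nonneg _) hR0.le
      _ = 2 * R * θ₀ := by ring
  have hsmall : ∀ P : ℝ, 0 < P → min (p 1) (q ν) ≤ P →
      ∀ j, j < N → P⁻¹ * (M * (M ^ j * (2 * R * θ₀))) ≤ 1 / 2 := by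
    intro P hP0 hPmin j hj
    have hMN : M * M ^ j ≤ M ^ (N + 1) := by
      have h : M * M ^ j = M ^ (j + 1) := by ring
      rw [h]
      exact pow_le_pow_right₀ hM1 (by omega)
    have hMN0 : (0:ℝ) < M ^ (N+1) := pow_pos hM0 _
    have hθP : θ₀ ≤ P / (4 * M ^ (N+1) * R) := by
      apply hθ₀key.trans
      have hden : (0:ℝ) < 4 * M ^ (N+1) * R :=
        mul_pos (mul_pos (by norm_num : (0:ℝ) < 4) (pow_pos hM0 _)) hR0
      exact (div_le_div_iff_of_pos_right hden).mpr hPmin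
    have hP' : P ≠ 0 := hP0.ne'
    calc P⁻¹ * (M * (M ^ j * (2 * R * θ₀)))
        = (M * M ^ j) * (2 * R * θ₀ * P⁻¹) := by ring
      _ ≤ M ^ (N+1) * (2 * R * θ₀ * P⁻¹) := by
          apply mul_le_mul_of_nonneg_right hMN
          have h2R : (0:ℝ) ≤ 2 * R := by linarith
          exact mul_nonneg (mul_nonneg h2R hθ₀pos.le) (inv_nonneg.mpr hP0.le)
      _ ≤ M ^ (N+1) * (2 * R * (P / (4 * M ^ (N+1) * R)) * P⁻¹) := by
          apply mul_le_mul_of_nonneg_left _ hMN0.le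
          apply mul_le_mul_of_nonneg_right _ (inv_nonneg.mpr hP0.le)
          exact mul_le_mul_of_nonneg_left hθP (by linarith)
      _ = 1 / 2 := by field_simp; ring
  have hAre : ∀ (j : ℕ) (z : ℂ), z ∈ K → 1/2 ≤ (A j z).re := by
    intro j z hzK
    obtain ⟨hz0, hzR, hza⟩ := hKmem z hzK
    rcases lt_or_ge j N with hjN | hNj
    · have hx0 : 0 ≤ ‖z‖ := norm_nonneg z
      have hxR : ‖z‖ ≤ R := by exact hzR
      have hxn : ‖((‖z‖ : ℝ):ℂ)‖ ≤ R := by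
        rw [Complex.norm_real, Real.norm_eq_abs, _root_.abs_of_nonneg hx0]; exact hxR
      have hdiff : ‖A j z - A j ((‖z‖ : ℝ):ℂ)‖
          ≤ (p 1)⁻¹ * (M * (M ^ j * (2 * R * θ₀))) := by
        rw [hA' j z, hA' j ((‖z‖ : ℝ):ℂ)]
        have heq : (1 + (p 1:ℂ)⁻¹ * G (fIter j z))
            - (1 + (p 1:ℂ)⁻¹ * G (fIter j ((‖z‖ : ℝ):ℂ)))
            = (p 1:ℂ)⁻¹ * (G (fIter j z) - G (fIter j ((‖z‖ : ℝ):ℂ))) := by ring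
        rw [heq, norm_mul]
        have h1 : ‖((p 1:ℝ):ℂ)⁻¹‖ = (p 1)⁻¹ := by
          rw [norm_inv, Complex.norm_real, Real.norm_eq_abs, _root_.abs_of_nonneg hp1.le]
        rw [h1]
        apply mul_le_mul_of_nonneg_left _ (inv_nonneg.mpr hp1.le)
        calc ‖G (fIter j z) - G (fIter j ((‖z‖ : ℝ):ℂ))‖
            ≤ M * ‖fIter j z - fIter j ((‖z‖ : ℝ):ℂ)‖ :=
              hLipG _ _ (hIterR' j z hzR) (hIterR' j _ hxn)
          _ ≤ M * (M ^ j * ‖z - ((‖z‖ : ℝ):ℂ)‖) :=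
              mul_le_mul_of_nonneg_left (hLipIter j z _ hzR hxn) hM0.le
          _ ≤ M * (M ^ j * (2 * R * θ₀)) := by
              apply mul_le_mul_of_nonneg_left _ hM0.le
              exact mul_le_mul_of_nonneg_left (harc z hzK) (pow_nonneg hM0.le j)
      have hsm := hsmall (p 1) hp1 (min_le_left _ _) j hjN
      have hre1 := hARe1 j (‖z‖) hx0 hxR
      have hrediff : |(A j z - A j ((‖z‖ : ℝ):ℂ)).re| ≤ 1/2 := by
        apply (Complex.abs_re_le_norm _).trans
        linarith
      rw [Complex.sub_re] at hrediff
      have := abs_le.mp hrediff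
      linarith [this.1]
    · have h14 := hAd4 j hNj z hzR
      have h1 : |(A j z - 1).re| ≤ 1/4 := by
        apply (Complex.abs_re_le_norm _).trans
        exact h14
      rw [Complex.sub_re, Complex.one_re] at h1
      have := abs_le.mp h1
      linarith [this.1]
  have hBre : ∀ (j : ℕ) (z : ℂ), z ∈ K → 1/2 ≤ (B j z).re := by
    intro j z hzK
    obtain ⟨hz0, hzR, hza⟩ := hKmem z hzK
    rcases lt_or_ge j N with hjN | hNj
    · have hx0 : 0 ≤ ‖z‖ := norm_nonneg z
      have hxR : ‖z‖ ≤ R := by exact hzR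
      have hxn : ‖((‖z‖ : ℝ):ℂ)‖ ≤ R := by
        rw [Complex.norm_real, Real.norm_eq_abs, _root_.abs_of_nonneg hx0]; exact hxR
      have hdiff : ‖B j z - B j ((‖z‖ : ℝ):ℂ)‖
          ≤ (q ν)⁻¹ * (M * (M ^ j * (2 * R * θ₀))) := by
        rw [hB' j z, hB' j ((‖z‖ : ℝ):ℂ)]
        have heq : (1 + (q ν:ℂ)⁻¹ * H (fIter j z))
            - (1 + (q ν:ℂ)⁻¹ * H (fIter j ((‖z‖ : ℝ):ℂ)))
            = (q ν:ℂ)⁻¹ * (H (fIter j z) - H (fIter j ((‖z‖ : ℝ):ℂ))) := by ring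
        rw [heq, norm_mul]
        have h1 : ‖((q ν:ℝ):ℂ)⁻¹‖ = (q ν)⁻¹ := by
          rw [norm_inv, Complex.norm_real, Real.norm_eq_abs, _root_.abs_of_nonneg hν.le]
        rw [h1]
        apply mul_le_mul_of_nonneg_left _ (inv_nonneg.mpr hν.le)
        calc ‖H (fIter j z) - H (fIter j ((‖z‖ : ℝ):ℂ))‖
            ≤ M * ‖fIter j z - fIter j ((‖z‖ : ℝ):ℂ)‖ :=
              hLipH _ _ (hIterR' j z hzR) (hIterR' j _ hxn)
          _ ≤ M * (M ^ j * ‖z - ((‖z‖ : ℝ):ℂ)‖) :=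
              mul_le_mul_of_nonneg_left (hLipIter j z _ hzR hxn) hM0.le
          _ ≤ M * (M ^ j * (2 * R * θ₀)) := by
              apply mul_le_mul_of_nonneg_left _ hM0.le
              exact mul_le_mul_of_nonneg_left (harc z hzK) (pow_nonneg hM0.le j)
      have hsm := hsmall (q ν) hν (min_le_right _ _) j hjN
      have hre1 := hBRe1 j (‖z‖) hx0 hxR
      have hrediff : |(B j z - B j ((‖z‖ : ℝ):ℂ)).re| ≤ 1/2 := by
        apply (Complex.abs_re_le_norm _).trans
        linarith
      rw [Complex.sub_re] at hrediff
      have := abs_le.mp hrediff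
      linarith [this.1]
    · have h14 := hBd4 j hNj z hzR
      have h1 : |(B j z - 1).re| ≤ 1/4 := by
        apply (Complex.abs_re_le_norm _).trans
        exact h14
      rw [Complex.sub_re, Complex.one_re] at h1
      have := abs_le.mp h1
      linarith [this.1]
  have hAne : ∀ (j : ℕ) (z : ℂ), z ∈ K → A j z ≠ 0 := by
    intro j z hz h
    have := hAre j z hz
    rw [h, Complex.zero_re] at this
    linarith
  have hBne : ∀ (j : ℕ) (z : ℂ), z ∈ K → B j z ≠ 0 := by
    intro j z hz h
    have := hBre j z hz
    rw [h, Complex.zero_re] at this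
    linarith
  have hAlo : ∀ (j : ℕ) (z : ℂ), z ∈ K → 1/2 ≤ ‖(A j z)‖ :=
    fun j z hz => (hAre j z hz).trans (Complex.re_le_norm _)
  have hBlo : ∀ (j : ℕ) (z : ℂ), z ∈ K → 1/2 ≤ ‖(B j z)‖ :=
    fun j z hz => (hBre j z hz).trans (Complex.re_le_norm _)
  have hAhi : ∀ (j : ℕ) (z : ℂ), z ∈ K → ‖(A j z)‖ ≤ 1 + (p 1)⁻¹ * R := by
    intro j z hz
    obtain ⟨hz0, hzR, _⟩ := hKmem z hz
    have h1 : ‖A j z‖ ≤ 1 + ‖A j z - 1‖ := by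
      have heq : A j z = 1 + (A j z - 1) := by ring
      calc ‖A j z‖ = ‖1 + (A j z - 1)‖ := by rw [← heq]
        _ ≤ ‖(1:ℂ)‖ + ‖A j z - 1‖ := norm_add_le _ _
        _ = 1 + ‖A j z - 1‖ := by rw [norm_one]
    have h2 := hAd j z hzR
    have h3 : (p 1)⁻¹ * (c ^ j * R) ≤ (p 1)⁻¹ * R := by
      apply mul_le_mul_of_nonneg_left _ (inv_nonneg.mpr hp1.le)
      have hcj : c ^ j ≤ 1 := pow_le_one₀ hc0.le hc1.le
      nlinarith
    linarith
  have hBhi : ∀ (j : ℕ) (z : ℂ), z ∈ K → ‖(B j z)‖ ≤ 1 + (q ν)⁻¹ * R := by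
    intro j z hz
    obtain ⟨hz0, hzR, _⟩ := hKmem z hz
    have h1 : ‖B j z‖ ≤ 1 + ‖B j z - 1‖ := by
      have heq : B j z = 1 + (B j z - 1) := by ring
      calc ‖B j z‖ = ‖1 + (B j z - 1)‖ := by rw [← heq]
        _ ≤ ‖(1:ℂ)‖ + ‖B j z - 1‖ := norm_add_le _ _
        _ = 1 + ‖B j z - 1‖ := by rw [norm_one]
    have h2 := hBd j z hzR
    have h3 : (q ν)⁻¹ * (c ^ j * R) ≤ (q ν)⁻¹ * R := by
      apply mul_le_mul_of_nonneg_left _ (inv_nonneg.mpr hν.le)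
      have hcj : c ^ j ≤ 1 := pow_le_one₀ hc0.le hc1.le
      nlinarith
    linarith
  set uA : ℕ → ℝ := fun j => if j < N then Real.log 2 + (1 + (p 1)⁻¹ * R) + Real.pi
    else 3/2 * ((p 1)⁻¹ * (c ^ j * R)) with huAdef
  set uB : ℕ → ℝ := fun j => if j < N then Real.log 2 + (1 + (q ν)⁻¹ * R) + Real.pi
    else 3/2 * ((q ν)⁻¹ * (c ^ j * R)) with huBdef
  have hlog2 : (0:ℝ) ≤ Real.log 2 := Real.log_nonneg (by norm_num)
  have hnnP : 0 ≤ (p 1)⁻¹ * R := mul_nonneg (inv_nonneg.mpr hp1.le) hR0.le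
  have hnnQ : 0 ≤ (q ν)⁻¹ * R := mul_nonneg (inv_nonneg.mpr hν.le) hR0.le
  have huAnn : ∀ j, 0 ≤ uA j := by
    intro j; rw [huAdef]; dsimp only; split
    · linarith [Real.log_nonneg (by norm_num : (1:ℝ) ≤ 2), Real.pi_pos]
    · have : 0 ≤ (p 1)⁻¹ * (c ^ j * R) :=
        mul_nonneg (inv_nonneg.mpr hp1.le) (mul_nonneg (pow_nonneg hc0.le j) hR0.le)
      linarith
  have huBnn : ∀ j, 0 ≤ uB j := by
    intro j; rw [huBdef]; dsimp only; split
    · linarith [Real.log_nonneg (by norm_num : (1:ℝ) ≤ 2), Real.pi_pos]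
    · have : 0 ≤ (q ν)⁻¹ * (c ^ j * R) :=
        mul_nonneg (inv_nonneg.mpr hν.le) (mul_nonneg (pow_nonneg hc0.le j) hR0.le)
      linarith
  have huA : ∀ (j : ℕ) (z : ℂ), z ∈ K → ‖Complex.log (A j z)‖ ≤ uA j := by
    intro j z hz
    rw [huAdef]; dsimp only
    by_cases hj : j < N
    · rw [if_pos hj]
      exact aux_log_norm_le _ _ (hAlo j z hz) (hAhi j z hz)
    · rw [if_neg hj]
      obtain ⟨hz0, hzR, _⟩ := hKmem z hz
      have h14 : ‖A j z - 1‖ ≤ 1/4 := hAd4 j (le_of_not_gt hj) z hzR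
      have h2 := hAd j z hzR
      calc ‖Complex.log (A j z)‖ ≤ 3/2 * ‖A j z - 1‖ :=
            aux_log_small (A j z) (by linarith)
        _ ≤ 3/2 * ((p 1)⁻¹ * (c ^ j * R)) := by linarith
  have huB : ∀ (j : ℕ) (z : ℂ), z ∈ K → ‖Complex.log (B j z)‖ ≤ uB j := by
    intro j z hz
    rw [huBdef]; dsimp only
    by_cases hj : j < N
    · rw [if_pos hj]
      exact aux_log_norm_le _ _ (hBlo j z hz) (hBhi j z hz)
    · rw [if_neg hj]
      obtain ⟨hz0, hzR, _⟩ := hKmem z hz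
      have h14 : ‖B j z - 1‖ ≤ 1/4 := hBd4 j (le_of_not_gt hj) z hzR
      have h2 := hBd j z hzR
      calc ‖Complex.log (B j z)‖ ≤ 3/2 * ‖B j z - 1‖ :=
            aux_log_small (B j z) (by linarith)
        _ ≤ 3/2 * ((q ν)⁻¹ * (c ^ j * R)) := by linarith
  have hgeo : Summable (fun j : ℕ => c ^ j) := summable_geometric_of_lt_one hc0.le hc1
  have SuA : Summable uA := by
    apply aux_summable_mod N (fun j => 3/2 * ((p 1)⁻¹ * (c ^ j * R)))
      ((hgeo.mul_left (3/2 * ((p 1)⁻¹ * R))).congr (fun j => by ring)) uA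
    intro j hj; rw [huAdef]; dsimp only; rw [if_neg (not_lt.mpr hj)]
  have SuB : Summable uB := by
    apply aux_summable_mod N (fun j => 3/2 * ((q ν)⁻¹ * (c ^ j * R)))
      ((hgeo.mul_left (3/2 * ((q ν)⁻¹ * R))).congr (fun j => by ring)) uB
    intro j hj; rw [huBdef]; dsimp only; rw [if_neg (not_lt.mpr hj)]
  have hprodA : ∀ (s : Finset ℕ) (z : ℂ), z ∈ K →
      Real.exp (-(∑' j, uA j)) ≤ ‖∏ j ∈ s, A j z‖ := by
    intro s z hz
    rw [norm_prod]
    have habs : ∀ j ∈ s, ‖A j z‖ = Real.exp ((Complex.log (A j z)).re) := by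
      intro j _
      rw [Complex.log_re, Real.exp_log (by linarith [hAlo j z hz])]
    rw [Finset.prod_congr rfl habs, ← Real.exp_sum]
    apply Real.exp_le_exp.mpr
    have h1 : ∀ j ∈ s, -(uA j) ≤ (Complex.log (A j z)).re := by
      intro j _
      have h2 : |(Complex.log (A j z)).re| ≤ uA j := by
        apply (Complex.abs_re_le_norm _).trans
        exact huA j z hz
      have := abs_le.mp h2
      linarith [this.1]
    calc -(∑' j, uA j) ≤ -(∑ j ∈ s, uA j) := by
          apply neg_le_neg
          exact Summable.sum_le_tsum s (fun j _ => huAnn j) SuA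
      _ = ∑ j ∈ s, -(uA j) := by rw [← Finset.sum_neg_distrib]
      _ ≤ ∑ j ∈ s, (Complex.log (A j z)).re := Finset.sum_le_sum h1
  have hprodB : ∀ (s : Finset ℕ) (z : ℂ), z ∈ K →
      Real.exp (-(∑' j, uB j)) ≤ ‖∏ j ∈ s, B j z‖ := by
    intro s z hz
    rw [norm_prod]
    have habs : ∀ j ∈ s, ‖B j z‖ = Real.exp ((Complex.log (B j z)).re) := by
      intro j _
      rw [Complex.log_re, Real.exp_log (by linarith [hBlo j z hz])]
    rw [Finset.prod_congr rfl habs, ← Real.exp_sum]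
    apply Real.exp_le_exp.mpr
    have h1 : ∀ j ∈ s, -(uB j) ≤ (Complex.log (B j z)).re := by
      intro j _
      have h2 : |(Complex.log (B j z)).re| ≤ uB j := by
        apply (Complex.abs_re_le_norm _).trans
        exact huB j z hz
      have := abs_le.mp h2
      linarith [this.1]
    calc -(∑' j, uB j) ≤ -(∑ j ∈ s, uB j) := by
          apply neg_le_neg
          exact Summable.sum_le_tsum s (fun j _ => huBnn j) SuB
      _ = ∑ j ∈ s, -(uB j) := by rw [← Finset.sum_neg_distrib]
      _ ≤ ∑ j ∈ s, (Complex.log (B j z)).re := Finset.sum_le_sum h1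
  have hp1c : ((p 1 : ℝ):ℂ) ≠ 0 := Complex.ofReal_ne_zero.mpr hp1.ne'
  have hfid : ∀ w : ℂ, ‖w‖ ≤ 1 → f w = (p 1 : ℂ) * w * (1 + (p 1:ℂ)⁻¹ * G w) := by
    intro w hw
    have hsC : Summable (fun n => (p n : ℂ) * w ^ n) :=
      aux_summable_pow p hpnn hsp (fun n => n) w hw
    have h1 := aux_split (fun n => (p n:ℂ) * w ^ n) hsC (by simp [hp0])
    have h2 : ∑' l, (if 1 < l then (p l:ℂ) * w ^ l else 0) = w * G w := by
      rw [hGdef]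
      dsimp only
      rw [← tsum_mul_left]
      apply tsum_congr; intro l
      by_cases h : 1 < l
      · rw [if_pos h, hvPdef]; dsimp only; rw [if_pos h]
        have hpow : w * w ^ (l - 1) = w ^ l := by
          conv_rhs => rw [show l = (l - 1) + 1 by omega]
          rw [pow_succ]; ring
        rw [← hpow]; ring
      · rw [if_neg h, hvPdef]; dsimp only; rw [if_neg h]; simp
    rw [hf w hw, h1, h2]
    show (p 1:ℂ) * w ^ 1 + w * G w = _
    rw [pow_one]
    field_simp
  have hprodId : ∀ (n : ℕ) (z : ℂ), ‖z‖ ≤ R →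
      fIter n z = (p 1:ℂ)^n * z * ∏ j ∈ Finset.range n, A j z := by
    intro n z hz
    induction n with
    | zero => rw [hf0]; simp
    | succ n ih =>
      rw [hfS, hfid _ ((hIterR n z hz).trans (hcjR1 n)), ← hA' n z, ih,
        Finset.prod_range_succ, pow_succ]
      ring
  have hsecK : ∀ z : ℂ, z ≠ 0 → ‖z‖ ≤ r → |z.arg| ≤ θ₀/2 → z ∈ K := by
    intro z h1 h2 h3
    exact ⟨h1, h2.trans hrR.le, h3.trans (by linarith)⟩
  refine ⟨θ₀ / 2, half_pos hθ₀pos, by linarith, ?_, ?_⟩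
  · -- part (a) and (b)
    intro z hz0 hzr hzθ
    have hzK : z ∈ K := hsecK z hz0 hzr hzθ
    have hzR : ‖z‖ ≤ R := hzr.trans hrR.le
    refine ⟨?_, fun k => hAne k z hzK, ?_⟩
    · have hz1 : ‖z‖ < 1 := lt_of_le_of_lt hzr hr1
      have hTd := (hS z hz1).norm
      have hlow : ∀ n : ℕ, Real.exp (-(∑' j, uA j)) * ‖z‖ ≤ ‖fIter n z / (p 1:ℂ)^n‖ := by
        intro n
        have heq : fIter n z / (p 1:ℂ)^n = z * ∏ j ∈ Finset.range n, A j z := by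
          rw [hprodId n z hzR]
          field_simp
        rw [heq, norm_mul]
        have h1 := hprodA (Finset.range n) z hzK
        calc Real.exp (-(∑' j, uA j)) * ‖z‖
            ≤ ‖∏ j ∈ Finset.range n, A j z‖ * ‖z‖ :=
              mul_le_mul_of_nonneg_right h1 (norm_nonneg z)
          _ = ‖z‖ * ‖∏ j ∈ Finset.range n, A j z‖ := mul_comm _ _
      have hfin : Real.exp (-(∑' j, uA j)) * ‖z‖ ≤ ‖S z‖ := ge_of_tendsto' hTd hlow
      intro hcontra
      rw [hcontra, norm_zero] at hfin
      have : 0 < Real.exp (-(∑' j, uA j)) * ‖z‖ :=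
        mul_pos (Real.exp_pos _) (norm_pos_iff.mpr hz0)
      linarith
    · have hzmem : z ∈ {z : ℂ | ‖z‖ ≤ r} := hzr
      have hTd := (hBlim.tendsto_at hzmem).norm
      have hlow : ∀ n : ℕ, Real.exp (-(∑' j, uB j)) ≤ ‖∏ j ∈ Finset.Icc 1 n, B j z‖ :=
        fun n => hprodB (Finset.Icc 1 n) z hzK
      have hfin : Real.exp (-(∑' j, uB j)) ≤ ‖Blim z‖ := ge_of_tendsto' hTd hlow
      intro hcontra
      rw [hcontra, norm_zero] at hfin
      linarith [Real.exp_pos (-(∑' j, uB j))]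
  · -- part (c)
    set tA : ℕ → ℝ := fun j => (j:ℝ) * uA j with htAdef
    have StA : Summable tA := by
      apply aux_summable_mod N (fun j => (3/2 * ((p 1)⁻¹ * R)) * ((j:ℝ) * c ^ j)) ?_ tA ?_
      · have h0 : Summable (fun j : ℕ => (j:ℝ) ^ 1 * c ^ j) :=
          summable_pow_mul_geometric_of_norm_lt_one 1
            (by rw [Real.norm_eq_abs, _root_.abs_of_nonneg hc0.le]; exact hc1)
        exact (h0.mul_left (3/2 * ((p 1)⁻¹ * R))).congr (fun j => by ring)
      · intro j hj
        rw [htAdef]; dsimp only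
        rw [huAdef]; dsimp only
        rw [if_neg (not_lt.mpr hj)]
        ring
    have htAnn : ∀ j, 0 ≤ tA j := by
      intro j; rw [htAdef]; dsimp only
      exact mul_nonneg (Nat.cast_nonneg j) (huAnn j)
    have hgAb : ∀ (j : ℕ) (z : ℂ), z ∈ K →
        ‖-((j:ℕ):ℂ) * Complex.log (A j z)‖ ≤ tA j := by
      intro j z hz
      rw [norm_mul, norm_neg, Complex.norm_natCast, htAdef]
      exact mul_le_mul_of_nonneg_left (huA j z hz) (Nat.cast_nonneg j)
    have hUnif : TendstoUniformlyOn
        (fun n z => ∑ j ∈ Finset.range n, -((j:ℕ):ℂ) * Complex.log (A j z))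
        (fun z => ∑' j, -((j:ℕ):ℂ) * Complex.log (A j z)) atTop K :=
      tendstoUniformlyOn_tsum_nat StA hgAb
    set hlim : ℂ → ℂ := fun z => ∑' j, -((j:ℕ):ℂ) * Complex.log (A j z) with hlimdef
    have hlimb : ∀ z ∈ K, ‖hlim z‖ ≤ ∑' j, tA j := by
      intro z hz
      rw [hlimdef]
      have hsn : Summable (fun j => ‖-((j:ℕ):ℂ) * Complex.log (A j z)‖) :=
        Summable.of_nonneg_of_le (fun _ => norm_nonneg _) (fun j => hgAb j z hz) StA
      calc ‖∑' j, -((j:ℕ):ℂ) * Complex.log (A j z)‖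
          ≤ ∑' j, ‖-((j:ℕ):ℂ) * Complex.log (A j z)‖ := norm_tsum_le_tsum_norm hsn
        _ ≤ ∑' j, tA j := Summable.tsum_le_tsum (fun j => hgAb j z hz) hsn StA
    set Cfun : ℂ → ℂ := fun z => Complex.exp (hlim z) with hCdef
    have hUnifExp : TendstoUniformlyOn
        (fun n z => Complex.exp (∑ j ∈ Finset.range n, -((j:ℕ):ℂ) * Complex.log (A j z)))
        Cfun atTop K := by
      rw [hCdef]
      apply aux_exp_unif _ _ _ (∑' j, tA j) _ hUnif
      intro x hx
      exact (Complex.re_le_norm _).trans (by exact hlimb x hx)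
    have hProdEq : ∀ (n : ℕ) (z : ℂ), z ∈ K →
        ∏ j ∈ Finset.Icc 1 n, A j z ^ (-(j:ℤ))
          = Complex.exp (∑ j ∈ Finset.range (n+1), -((j:ℕ):ℂ) * Complex.log (A j z)) := by
      intro n z hz
      rw [← aux_sum_Icc (fun j => -((j:ℕ):ℂ) * Complex.log (A j z)) (by simp) n]
      rw [Complex.exp_sum]
      apply Finset.prod_congr rfl
      intro j _
      have hlog : Complex.exp (Complex.log (A j z)) = A j z := Complex.exp_log (hAne j z hz)
      have h2 : Complex.exp (((-(j:ℤ) : ℤ) : ℂ) * Complex.log (A j z))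
          = Complex.exp (Complex.log (A j z)) ^ (-(j:ℤ)) := Complex.exp_int_mul _ _
      rw [hlog] at h2
      rw [← h2]
      congr 1
      push_cast
      ring
    have hsec : {z : ℂ | z ≠ 0 ∧ ‖z‖ ≤ r ∧ |z.arg| ≤ θ₀/2} ⊆ K := by
      intro z hz
      exact hsecK z hz.1 hz.2.1 hz.2.2
    refine ⟨Cfun, ?_, ?_, ⟨Real.exp (∑' j, tA j), ?_⟩, ?_⟩
    · intro u hu
      have h1 := hUnifExp u hu
      have h2 := (tendsto_add_atTop_nat 1).eventually h1
      filter_upwards [h2] with n hn z hzsec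
      have hzK : z ∈ K := hsec hzsec
      rw [hProdEq n z hzK]
      exact hn z hzK
    · set U : Set ℂ := {z : ℂ | z ≠ 0 ∧ ‖z‖ < R ∧ |z.arg| < θ₀} with hUdef
      have hUopen : IsOpen U := aux_open R θ₀ hθ₀pos (by linarith)
      have hUK : U ⊆ K := fun z hz => ⟨hz.1, hz.2.1.le, hz.2.2.le⟩
      have hsecU : {z : ℂ | z ≠ 0 ∧ ‖z‖ ≤ r ∧ |z.arg| ≤ θ₀/2} ⊆ U := by
        intro z hz
        exact ⟨hz.1, lt_of_le_of_lt hz.2.1 hrR, lt_of_le_of_lt hz.2.2 (by linarith)⟩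
      have hGdiffB : DifferentiableOn ℂ G (Metric.ball (0:ℂ) 1) := by
        rw [hGdef]; exact aux_diff vP hvPnn hvP _
      have hfdiffB : DifferentiableOn ℂ f (Metric.ball (0:ℂ) 1) := by
        apply DifferentiableOn.congr (aux_diff p hpnn hsp (fun n => n))
        intro z hz
        rw [Metric.mem_ball, dist_zero_right] at hz
        exact hf z hz.le
      have hmaps : ∀ j : ℕ, Set.MapsTo (fIter j) (Metric.ball (0:ℂ) R') (Metric.ball (0:ℂ) 1) := by
        intro j x hx
        rw [Metric.mem_ball, dist_zero_right] at hx ⊢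
        have h1 := hiter R' hR'0.le le_rfl j x hx.le
        have hcj : c ^ j ≤ 1 := pow_le_one₀ hc0.le hc1.le
        nlinarith
      have hIterDiff : ∀ j, DifferentiableOn ℂ (fIter j) (Metric.ball (0:ℂ) R') := by
        intro j
        induction j with
        | zero => exact differentiableOn_id.congr (fun x _ => hf0 x)
        | succ j ih =>
          exact DifferentiableOn.congr (hfdiffB.comp ih (hmaps j)) (fun x _ => hfS j x)
      have hAdiff : ∀ j, DifferentiableOn ℂ (A j) (Metric.ball (0:ℂ) R') := by
        intro j
        apply DifferentiableOn.congr _ (fun z _ => hA' j z)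
        exact (differentiableOn_const _).add
          ((hGdiffB.comp (hIterDiff j) (hmaps j)).const_mul _)
      have hgADiffU : ∀ j : ℕ,
          DifferentiableOn ℂ (fun z => -((j:ℕ):ℂ) * Complex.log (A j z)) U := by
        intro j z hz
        have hzball : z ∈ Metric.ball (0:ℂ) R' := by
          rw [Metric.mem_ball, dist_zero_right]
          exact lt_trans hz.2.1 hRR'
        have h1 : DifferentiableAt ℂ (A j) z :=
          (hAdiff j).differentiableAt (Metric.isOpen_ball.mem_nhds hzball)
        have h2 : A j z ∈ Complex.slitPlane := by
          rw [Complex.mem_slitPlane_iff]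
          left
          have := hAre j z (hUK hz)
          linarith
        exact ((h1.clog h2).const_mul _).differentiableWithinAt
      have hlimDiffU : DifferentiableOn ℂ hlim U := by
        rw [hlimdef]
        exact differentiableOn_tsum_of_summable_norm StA hgADiffU hUopen
          (fun j w hw => hgAb j w (hUK hw))
      rw [hCdef]
      exact (hlimDiffU.cexp).mono hsecU
    · intro z h1 h2 h3
      rw [hCdef]
      dsimp only
      rw [Complex.norm_exp]
      apply Real.exp_le_exp.mpr
      exact (Complex.re_le_norm _).trans
        (by exact hlimb z (hsecK z h1 h2 h3))
    · intro z _ _ _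
      rw [hCdef]
      exact Complex.exp_ne_zero _
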